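/- arXiv:0810.0567 — 6 statements merged into one kernel-verified Lean document; each statement's English description precedes it below -/
import Mathlib

section
/- Let C be an (n,k) linear code over GF(q^m) whose trace code Tr(C) is an (n,k') linear code over GF(q), and let H' be an (n-k')×n matrix over GF(q) of rank n-k' such that Tr(C) = {x ∈ GF(q)^n : H' x^T = 0}. Then every row of H', viewed as a vector in GF(q^m)^n via the inclusion GF(q) ⊆ GF(q^m), lies in the dual code C^⊥, and there exists a (k'-k)×n matrix H'' over GF(q^m) such that C = {x ∈ GF(q^m)^n : H' x^T = 0 and H'' x^T = 0}; that is, C has a parity-check matrix of the stacked form [H'; H'']. -/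
set_option maxHeartbeats 1000000
set_option synthInstance.maxHeartbeats 400000

/-- If `C` is an `(n,k)` code over `GF(q^m)` whose trace code is an
`(n,k')` code over `GF(q)` with full-rank parity-check matrix `H'`, then the rows of
`H'` (embedded into `GF(q^m)`) lie in the dual code `C^⊥`, and `C` has a parity-check
matrix of the stacked form `[H'; H'']` for some `(k'-k) × n` matrix `H''` over `GF(q^m)`. -/
theorem stmt_1 (F E : Type*) [Field F] [Field E] [Fintype F] [Fintype E] [Algebra F E]
    (n k k' : ℕ)
    (C : Submodule E (Fin n → E)) (hk : Module.finrank E C = k)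
    (TrC : Submodule F (Fin n → F))
    (hTrC : (TrC : Set (Fin n → F)) =
      {y | ∃ x ∈ C, (fun i => Algebra.trace F E (x i)) = y})
    (hk' : Module.finrank F TrC = k')
    (H' : Matrix (Fin (n - k')) (Fin n) F)
    (hrank : H'.rank = n - k')
    (hH' : ∀ y : Fin n → F, y ∈ TrC ↔ H'.mulVec y = 0) :
    (∀ r : Fin (n - k'), ∀ c ∈ C, ∑ i, algebraMap F E (H' r i) * c i = 0) ∧
    ∃ H'' : Matrix (Fin (k' - k)) (Fin n) E,
      ∀ x : Fin n → E, x ∈ C ↔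
        ((H'.map (algebraMap F E)).mulVec x = 0 ∧ H''.mulVec x = 0) := by
  classical
  set f := algebraMap F E with hf
  -- Part 1
  have part1 : ∀ r : Fin (n - k'), ∀ c ∈ C, ∑ i, f (H' r i) * c i = 0 := by
    intro r c hc
    apply (traceForm_nondegenerate F E).1
    intro a
    rw [Algebra.traceForm_apply]
    have hy : (fun i => Algebra.trace F E ((a • c) i)) ∈ TrC := by
      rw [← SetLike.mem_coe, hTrC]
      exact ⟨a • c, C.smul_mem a hc, rfl⟩
    have h0 := congrFun ((hH' _).1 hy) r
    simp only [Matrix.mulVec, dotProduct, Pi.zero_apply, Pi.smul_apply,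
      smul_eq_mul] at h0
    calc Algebra.trace F E ((∑ i, f (H' r i) * c i) * a)
        = ∑ i, H' r i * Algebra.trace F E (a * c i) := by
          rw [Finset.sum_mul, map_sum]
          refine Finset.sum_congr rfl fun i _ => ?_
          rw [← Algebra.smul_def, smul_mul_assoc, map_smul, smul_eq_mul,
            mul_comm (c i) a]
      _ = 0 := h0
  refine ⟨part1, ?_⟩
  set HE := H'.map f with hHE
  -- H' is surjective as a linear map over F
  have hsurjF : Function.Surjective H'.mulVecLin := by
    rw [← LinearMap.range_eq_top]
    apply Submodule.eq_top_of_finrank_eq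
    rw [Module.finrank_pi, Fintype.card_fin]
    exact hrank
  -- HE is surjective as a linear map over E
  have hsurjE : Function.Surjective HE.mulVecLin := by
    rw [← LinearMap.range_eq_top, ← top_le_iff]
    intro v _
    have hv : v = ∑ j, v j • (Pi.single j 1 : Fin (n - k') → E) := by
      ext i
      simp [Pi.single_apply, Finset.sum_ite_eq']
    rw [hv]
    refine Submodule.sum_mem _ fun j _ => Submodule.smul_mem _ _ ?_
    obtain ⟨y, hy⟩ := hsurjF (Pi.single j (1 : F))
    refine ⟨fun i => f (y i), ?_⟩
    ext r
    have hyr := congrFun hy r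
    simp only [Matrix.mulVecLin_apply, Matrix.mulVec, dotProduct] at hyr ⊢
    simp only [hHE, Matrix.map_apply]
    calc ∑ i, f (H' r i) * f (y i) = f (∑ i, H' r i * y i) := by
          rw [map_sum]; exact Finset.sum_congr rfl fun i _ => (map_mul f _ _).symm
      _ = (Pi.single j 1 : Fin (n - k') → E) r := by
          rw [hyr]
          simp [Pi.single_apply, apply_ite f]
  -- the kernel V of HE has dimension k'
  set V := LinearMap.ker HE.mulVecLin with hV
  have hk'n : k' ≤ n := by
    rw [← hk']
    simpa [Module.finrank_pi] using Submodule.finrank_le TrC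
  have hVrank : Module.finrank E V = k' := by
    have h1 := HE.mulVecLin.finrank_range_add_finrank_ker
    rw [LinearMap.range_eq_top.2 hsurjE, finrank_top, Module.finrank_pi,
      Module.finrank_pi, Fintype.card_fin, Fintype.card_fin, ← hV] at h1
    omega
  have hCV : C ≤ V := by
    intro c hc
    simp only [hV, LinearMap.mem_ker]
    ext r
    simpa [Matrix.mulVecLin_apply, Matrix.mulVec, dotProduct, hHE,
      Matrix.map_apply] using part1 r c hc
  -- C as a submodule of V
  set C' : Submodule E V := C.comap V.subtype with hC'
  have hC'rank : Module.finrank E C' = k := by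
    rw [← hk]
    exact (Submodule.comapSubtypeEquivOfLe hCV).finrank_eq
  have hQrank : Module.finrank E (V ⧸ C') = k' - k := by
    have h2 := Submodule.finrank_quotient_add_finrank C'
    rw [hC'rank, hVrank] at h2
    omega
  -- a basis of the quotient
  let b : Module.Basis (Fin (k' - k)) E (V ⧸ C') := Module.finBasisOfFinrankEq E _ hQrank
  obtain ⟨W, hW⟩ := Submodule.exists_isCompl V
  let π := V.linearProjOfIsCompl W hW
  let φ : Fin (k' - k) → ((Fin n → E) →ₗ[E] E) :=
    fun j => (b.coord j) ∘ₗ (C'.mkQ ∘ₗ π)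
  refine ⟨fun j i => φ j (Pi.single i 1), fun x => ?_⟩
  have hmv : ∀ j, Matrix.mulVec (fun j i => φ j (Pi.single i 1)) x j = φ j x := by
    intro j
    have hx : x = ∑ i, x i • (Pi.single i 1 : Fin n → E) := by
      ext i
      simp [Pi.single_apply, Finset.sum_ite_eq']
    simp only [Matrix.mulVec, dotProduct]
    conv_rhs => rw [hx]
    rw [map_sum]
    exact Finset.sum_congr rfl fun i _ => by rw [map_smul, smul_eq_mul, mul_comm]
  constructor
  · intro hx
    have hxV : x ∈ V := hCV hx
    have hπ : π x = ⟨x, hxV⟩ := V.linearProjOfIsCompl_apply_left hW ⟨x, hxV⟩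
    refine ⟨hxV, ?_⟩
    funext j
    rw [hmv j]
    simp only [φ, LinearMap.comp_apply, hπ, Submodule.mkQ_apply, Pi.zero_apply]
    have hmem : (⟨x, hxV⟩ : V) ∈ C' := hx
    rw [(Submodule.Quotient.mk_eq_zero C').2 hmem]
    simp
  · rintro ⟨hx1, hx2⟩
    have hxV : x ∈ V := hx1
    have hπ : π x = ⟨x, hxV⟩ := V.linearProjOfIsCompl_apply_left hW ⟨x, hxV⟩
    have hcoord : ∀ j, b.coord j (Submodule.Quotient.mk (⟨x, hxV⟩ : V) : V ⧸ C') = 0 := by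
      intro j
      have h3 := congrFun hx2 j
      rw [hmv j] at h3
      simpa only [φ, LinearMap.comp_apply, hπ, Submodule.mkQ_apply, Pi.zero_apply] using h3
    have h4 : (Submodule.Quotient.mk (⟨x, hxV⟩ : V) : V ⧸ C') = 0 :=
      (b.forall_coord_eq_zero_iff).1 hcoord
    exact (Submodule.Quotient.mk_eq_zero C').1 h4
end

section
/- Let C be a nonzero (n,k,d) linear code over GF(q^m) and B a basis of GF(q^m) over GF(q). Let d_i be the minimum distance of the image code Im_B(C). Then d ≤ d_i. Moreover, if the subfield subcode SS(C) = C ∩ GF(q)^n is nonzero with minimum distance d_ss, then d_i ≤ d_ss; hence d ≤ d_i ≤ d_ss. -/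
/-- For a nonzero `(n,k,d)` code `C` over `GF(q^m)` and a basis `B` with
dual basis `B'`, the minimum distance `d_i` of the image code `Im_B(C)` satisfies
`d ≤ d_i`, and if the subfield subcode `SS(C) = C ∩ GF(q)^n` is nonzero with minimum
distance `d_ss` then `d_i ≤ d_ss`. (The image of a codeword `c` is the vector indexed
by `Fin n × Fin m` with entries `Tr(c_i β'_j)`.) -/
theorem stmt_2 (F E : Type*) [Field F] [Field E] [Fintype F] [Fintype E]
    [DecidableEq F] [DecidableEq E] [Algebra F E]
    (m n : ℕ) (B : Module.Basis (Fin m) F E) (B' : Fin m → E)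
    (hdual : ∀ i j, Algebra.trace F E (B i * B' j) = if i = j then 1 else 0)
    (C : Submodule E (Fin n → E)) (hC : C ≠ ⊥)
    (d di : ℕ)
    (hd : IsLeast {w | ∃ c ∈ C, c ≠ 0 ∧ hammingNorm c = w} d)
    (hdi : IsLeast {w | ∃ c ∈ C, c ≠ 0 ∧
      hammingNorm (fun p : Fin n × Fin m => Algebra.trace F E (c p.1 * B' p.2)) = w} di) :
    d ≤ di ∧
    ∀ dss : ℕ,
      IsLeast {w | ∃ c ∈ C, c ≠ 0 ∧ (∀ i, c i ∈ (algebraMap F E).range) ∧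
        hammingNorm c = w} dss →
      di ≤ dss := by
  classical
  obtain ⟨k0⟩ := B.index_nonempty
  -- key trace computation
  have htr : ∀ (x : E) (j : Fin m), Algebra.trace F E (x * B' j) = B.repr x j := by
    intro x j
    conv_lhs => rw [← B.sum_repr x]
    rw [Finset.sum_mul, map_sum, Finset.sum_eq_single j]
    · rw [smul_mul_assoc, map_smul, hdual, if_pos rfl, smul_eq_mul, mul_one]
    · intro i _ hij
      rw [smul_mul_assoc, map_smul, hdual, if_neg hij, smul_zero]
    · intro h; exact absurd (Finset.mem_univ j) h
  constructor
  · obtain ⟨c, hcC, hc0, hnorm⟩ := hdi.1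
    have h1 : d ≤ hammingNorm c := hd.2 ⟨c, hcC, hc0, rfl⟩
    refine h1.trans ?_
    rw [← hnorm]
    unfold hammingNorm
    have hex : ∀ i : Fin n, c i ≠ 0 → ∃ j, B.repr (c i) j ≠ 0 := by
      intro i h
      by_contra hc
      push_neg at hc
      apply h
      have : B.repr (c i) = 0 := Finsupp.ext hc
      have := congrArg B.repr.symm this
      simpa using this
    set J : Fin n → Fin m := fun i =>
      if h : c i ≠ 0 then (hex i h).choose else k0 with hJ
    apply Finset.card_le_card_of_injOn (fun i => (i, J i))
    · intro i hi
      simp only [Finset.mem_coe, Finset.mem_filter, Finset.mem_univ, true_and] at hi ⊢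
      have hJi : J i = (hex i hi).choose := by simp only [hJ]; rw [dif_pos hi]
      rw [htr, hJi]
      exact (hex i hi).choose_spec
    · intro a _ b _ hab
      exact (Prod.mk.injEq _ _ _ _ ▸ hab).1
  · intro dss hdss
    obtain ⟨c, hcC, hc0, hrange, hnorm⟩ := hdss.1
    choose f hf using hrange
    have hc'C : B k0 • c ∈ C := C.smul_mem _ hcC
    have hc'0 : B k0 • c ≠ 0 := smul_ne_zero (B.ne_zero k0) hc0
    have hle : di ≤ hammingNorm
        (fun p : Fin n × Fin m => Algebra.trace F E ((B k0 • c) p.1 * B' p.2)) :=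
      hdi.2 ⟨B k0 • c, hc'C, hc'0, rfl⟩
    refine hle.trans ?_
    rw [← hnorm]
    have hentry : ∀ p : Fin n × Fin m,
        Algebra.trace F E ((B k0 • c) p.1 * B' p.2)
          = if k0 = p.2 then f p.1 else 0 := by
      intro p
      have : (B k0 • c) p.1 * B' p.2 = f p.1 • (B k0 * B' p.2) := by
        rw [Pi.smul_apply, smul_eq_mul, ← hf p.1, Algebra.smul_def]
        ring
      rw [this, map_smul, hdual]
      split <;> simp
    unfold hammingNorm
    apply Finset.card_le_card_of_injOn (fun p : Fin n × Fin m => p.1)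
    · intro p hp
      simp only [Finset.mem_coe, Finset.mem_filter, Finset.mem_univ, true_and, hentry] at hp ⊢
      intro h
      have hf0 : f p.1 = 0 := (algebraMap F E).injective (by rw [hf p.1, h, map_zero])
      apply hp
      split <;> simp [hf0]
    · intro a ha b hb hab
      simp only [Finset.mem_coe, Finset.mem_filter, Finset.mem_univ, true_and, hentry] at ha hb
      have ha2 : k0 = a.2 := by by_contra h; exact ha (if_neg h)
      have hb2 : k0 = b.2 := by by_contra h; exact hb (if_neg h)
      exact Prod.ext hab (hb2 ▸ ha2.symm)
end

section
/- Let C be an (n,k,d) linear code over GF(q^m) with k ≥ 1, and suppose its trace code Tr(C) is an (n,k') linear code over GF(q) (necessarily k' ≥ k). Then d ≤ d_{k'-k+1}(Tr(C)), the (k'-k+1)-th generalized Hamming weight of Tr(C). -/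
open Module

set_option maxHeartbeats 1000000
set_option synthInstance.maxHeartbeats 400000

/-- Let `C` be an `(n,k,d)` code over `GF(q^m)` with `k ≥ 1`, whose trace
code `Tr(C)` is an `(n,k')` code over `GF(q)`. Then `d ≤ d_{k'-k+1}(Tr(C))`, the
`(k'-k+1)`-th generalized Hamming weight of `Tr(C)` (the minimum support size of a
`(k'-k+1)`-dimensional subcode). -/
theorem stmt_4 (F E : Type*) [Field F] [Field E] [Fintype F] [Fintype E]
    [DecidableEq E] [Algebra F E]
    (n k k' d : ℕ)
    (C : Submodule E (Fin n → E)) (hk : Module.finrank E C = k) (hk1 : 1 ≤ k)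
    (hd : IsLeast {w | ∃ c ∈ C, c ≠ 0 ∧ hammingNorm c = w} d)
    (TrC : Submodule F (Fin n → F))
    (hTrC : (TrC : Set (Fin n → F)) =
      {y | ∃ x ∈ C, (fun i => Algebra.trace F E (x i)) = y})
    (hk' : Module.finrank F TrC = k') :
    d ≤ sInf {w | ∃ D : Submodule F (Fin n → F), D ≤ TrC ∧
      Module.finrank F ↥D = k' - k + 1 ∧ {i : Fin n | ∃ c ∈ D, c i ≠ 0}.ncard = w} := by
  classical
  haveI : FiniteDimensional F E := Module.Finite.of_finite
  -- trace nondegeneracy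
  have htr : ∀ z : E, (∀ α : E, Algebra.trace F E (α * z) = 0) → z = 0 := fun z hz =>
    (traceForm_nondegenerate F E).1 z (fun y => by
      simpa [Algebra.traceForm_apply, mul_comm] using hz y)
  have hm1 : 0 < finrank F E := finrank_pos
  set m := finrank F E with hm
  have hmem : ∀ y : Fin n → F,
      y ∈ TrC ↔ ∃ x ∈ C, (fun i => Algebra.trace F E (x i)) = y := by
    intro y
    rw [← SetLike.mem_coe, hTrC]
    rfl
  obtain ⟨c0, hc0C, hc0ne, hc0d⟩ := hd.1
  have hd1 : 1 ≤ d := hc0d ▸ hammingNorm_pos_iff.mpr hc0ne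
  obtain ⟨α0, hα0⟩ : ∃ α : E, Algebra.trace F E α ≠ 0 := by
    by_contra h
    push_neg at h
    exact one_ne_zero (htr 1 (fun α => by simpa using h α))
  obtain ⟨i0, hi0⟩ : ∃ i, c0 i ≠ 0 := by
    by_contra h
    push_neg at h
    exact hc0ne (funext h)
  have hk'1 : 1 ≤ k' := by
    rw [← hk']
    haveI : Nontrivial ↥TrC := by
      refine ⟨⟨⟨fun i => Algebra.trace F E (((α0 * (c0 i0)⁻¹) • c0) i),
        (hmem _).mpr ⟨_, C.smul_mem _ hc0C, rfl⟩⟩, 0, ?_⟩⟩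
      intro h
      apply hα0
      have h2 := congrArg (fun y : ↥TrC => (y : Fin n → F) i0) h
      simpa [mul_assoc, inv_mul_cancel₀ hi0] using h2
    exact Module.finrank_pos
  -- the main bound
  have hbound : ∀ w, (∃ D : Submodule F (Fin n → F), D ≤ TrC ∧
      Module.finrank F ↥D = k' - k + 1 ∧ {i : Fin n | ∃ c ∈ D, c i ≠ 0}.ncard = w) → d ≤ w := by
    rintro w ⟨D, hDle, hDr, rfl⟩
    by_contra hlt
    push_neg at hlt
    set I : Set (Fin n) := {i : Fin n | ∃ c ∈ D, c i ≠ 0} with hI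
    -- masking map
    set μ : (Fin n → F) →ₗ[F] (Fin n → F) :=
      { toFun := fun y i => if i ∈ I then 0 else y i
        map_add' := fun a b => by funext i; by_cases h : i ∈ I <;> simp [h]
        map_smul' := fun a b => by funext i; by_cases h : i ∈ I <;> simp [h] }
      with hμ
    set Trmap : (Fin n → E) →ₗ[F] (Fin n → F) := (Algebra.trace F E).compLeft (Fin n) with hTrm
    set CF : Submodule F (Fin n → E) := C.restrictScalars F with hCF
    set θ : ↥TrC →ₗ[F] (Fin n → F) := μ.domRestrict TrC with hθdef
    set Φ : ↥CF →ₗ[F] (Fin n → F) := (μ ∘ₗ Trmap).domRestrict CF with hΦdef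
    have hΦapp : ∀ (x : ↥CF) (i : Fin n),
        Φ x i = if i ∈ I then 0 else Algebra.trace F E ((x : Fin n → E) i) := by
      intro x i
      rfl
    -- ranges coincide
    have hmapTr : CF.map Trmap = TrC := by
      ext y
      simp only [Submodule.mem_map, Submodule.restrictScalars_mem, hCF]
      rw [hmem y]
      constructor
      · rintro ⟨x, hx, rfl⟩
        exact ⟨x, hx, rfl⟩
      · rintro ⟨x, hx, hxy⟩
        exact ⟨x, hx, hxy⟩
    have hrange : LinearMap.range Φ = LinearMap.range θ := by
      rw [LinearMap.range_domRestrict, LinearMap.range_domRestrict, Submodule.map_comp, hmapTr]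
    -- kernel of θ contains (a copy of) D
    have hker : D.comap TrC.subtype ≤ LinearMap.ker θ := by
      intro x hx
      simp only [Submodule.mem_comap] at hx
      have hx0 : θ x = 0 := by
        funext i
        by_cases h : i ∈ I
        · simp [hθdef, hμ, h]
        · have hxi : (x : Fin n → F) i = 0 := by
            by_contra hne
            exact h ⟨x, hx, hne⟩
          simp [hθdef, hμ, h, hxi]
      exact hx0
    have hkerD : (k' - k + 1) ≤ finrank F ↥(LinearMap.ker θ) := by
      calc k' - k + 1 = finrank F ↥D := hDr.symm
        _ = finrank F ↥(D.comap TrC.subtype) :=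
          (Submodule.comapSubtypeEquivOfLe hDle).finrank_eq.symm
        _ ≤ finrank F ↥(LinearMap.ker θ) := Submodule.finrank_mono hker
    have hθrn : finrank F ↥(LinearMap.range θ) + finrank F ↥(LinearMap.ker θ) = k' := by
      rw [LinearMap.finrank_range_add_finrank_ker θ, hk']
    -- kernel of Φ description
    have hkerΦ : ∀ x : ↥CF, x ∈ LinearMap.ker Φ ↔
        ∀ i ∉ I, Algebra.trace F E ((x : Fin n → E) i) = 0 := by
      intro x
      simp only [LinearMap.mem_ker]
      constructor
      · intro h i hi
        have h2 := congrFun h i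
        rw [hΦapp] at h2
        simpa [hi] using h2
      · intro h
        funext i
        rw [hΦapp]
        by_cases hi : i ∈ I
        · simp [hi]
        · simp [hi, h i hi]
    -- weight bound for vectors supported in I
    have hnorm : ∀ x : Fin n → E, (∀ i ∉ I, x i = 0) → hammingNorm x ≤ I.ncard := by
      intro x hx
      rw [Set.ncard_eq_toFinset_card']
      apply Finset.card_le_card
      intro i hi
      simp only [Finset.mem_filter, Finset.mem_univ, true_and] at hi
      rw [Set.mem_toFinset]
      by_contra h
      exact hi (hx i h)
    -- no E-line in ker Φ
    have hline : ∀ x : ↥CF, (∀ α : E, α • x ∈ LinearMap.ker Φ) → x = 0 := by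
      intro x hαx
      have hx0 : ∀ i ∉ I, (x : Fin n → E) i = 0 := by
        intro i hi
        refine htr _ (fun α => ?_)
        have h2 := (hkerΦ (α • x)).mp (hαx α) i hi
        exact h2
      by_contra hxne
      have hxC : (x : Fin n → E) ∈ C := x.2
      have hxne' : (x : Fin n → E) ≠ 0 := fun h => hxne (Subtype.ext h)
      have hge : d ≤ hammingNorm (x : Fin n → E) := hd.2 ⟨x, hxC, hxne', rfl⟩
      have hle : hammingNorm (x : Fin n → E) ≤ I.ncard := hnorm _ hx0
      omega
    -- embed CF into (Fin m → Q)
    set V : Submodule F ↥CF := LinearMap.ker Φ with hV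
    set b : Basis (Fin m) F E := Module.finBasis F E with hb
    set ψ : ↥CF →ₗ[F] (Fin m → (↥CF ⧸ V)) :=
      { toFun := fun x j => Submodule.Quotient.mk ((b j : E) • x)
        map_add' := fun x y => by
          funext j
          simp [smul_add]
        map_smul' := fun c x => by
          funext j
          have hc : (b j : E) • (c • x) = c • ((b j : E) • x) := by
            rw [← algebraMap_smul E c x, ← algebraMap_smul E c ((b j : E) • x),
              smul_smul, smul_smul, mul_comm]
          simp [hc] }
      with hψ
    have hψinj : Function.Injective ψ := by
      rw [injective_iff_map_eq_zero]
      intro x hx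
      apply hline
      intro α
      have hbj : ∀ j, (b j : E) • x ∈ V := by
        intro j
        have h2 := congrFun hx j
        rw [hψ] at h2
        exact (Submodule.Quotient.mk_eq_zero V).mp h2
      have hrepr : α • x = ∑ j, (b.repr α j) • ((b j : E) • x) := by
        calc α • x = (∑ j, (b.repr α j) • (b j : E)) • x := by rw [b.sum_repr α]
          _ = ∑ j, ((b.repr α j) • (b j : E)) • x := Finset.sum_smul
          _ = ∑ j, (b.repr α j) • ((b j : E) • x) :=
              Finset.sum_congr rfl fun j _ => smul_assoc _ _ _
      rw [hrepr]
      exact Submodule.sum_mem V (fun j _ => Submodule.smul_mem V _ (hbj j))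
    have hfin1 : finrank F ↥CF ≤ finrank F (Fin m → (↥CF ⧸ V)) :=
      LinearMap.finrank_le_finrank_of_injective hψinj
    have hfin2 : finrank F (Fin m → (↥CF ⧸ V)) = m * finrank F (↥CF ⧸ V) := by
      haveI : Module.Free F (↥CF ⧸ V) := Module.Free.of_divisionRing F _
      rw [Module.finrank_pi_fintype, Finset.sum_const, Finset.card_univ, Fintype.card_fin,
        smul_eq_mul]
    have hfin3 : finrank F (↥CF ⧸ V) = finrank F ↥(LinearMap.range Φ) :=
      (LinearMap.quotKerEquivRange Φ).finrank_eq
    have hfin4 : finrank F ↥CF = m * k := by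
      have h1 : finrank E ↥CF = k := by
        rw [← hk]
        exact (Submodule.restrictScalarsEquiv F E (Fin n → E) C).finrank_eq
      calc finrank F ↥CF = finrank F E * finrank E ↥CF :=
            (Module.finrank_mul_finrank F E ↥CF).symm
        _ = m * k := by rw [h1]
    have hks : k ≤ finrank F ↥(LinearMap.range θ) := by
      have h5 : m * k ≤ m * finrank F ↥(LinearMap.range θ) := by
        rw [← hrange]
        calc m * k = finrank F ↥CF := hfin4.symm
          _ ≤ finrank F (Fin m → (↥CF ⧸ V)) := hfin1
          _ = m * finrank F ↥(LinearMap.range Φ) := by rw [hfin2, hfin3]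
      exact Nat.le_of_mul_le_mul_left h5 hm1
    omega
  -- the set is nonempty
  have hr : k' - k + 1 ≤ k' := by omega
  obtain ⟨f, hf⟩ := exists_linearIndependent_of_le_finrank (R := F) (M := ↥TrC)
    (n := k' - k + 1) (by rw [hk']; exact hr)
  set D0 : Submodule F ↥TrC := Submodule.span F (Set.range f) with hD0def
  have hD0 : finrank F ↥D0 = k' - k + 1 := by
    rw [hD0def, finrank_span_eq_card hf, Fintype.card_fin]
  set D1 : Submodule F (Fin n → F) := D0.map TrC.subtype with hD1def
  have hD1le : D1 ≤ TrC := by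
    rintro x ⟨y, hy, rfl⟩
    exact y.2
  have hD1 : finrank F ↥D1 = k' - k + 1 := by
    rw [← hD0]
    exact (Submodule.equivMapOfInjective TrC.subtype (Submodule.injective_subtype TrC)
      D0).finrank_eq.symm
  exact le_csInf ⟨_, D1, hD1le, hD1, rfl⟩ hbound
end

section
/- Let C be a linear code of length n over GF(2^m) whose trace code Tr(C) is nonzero with minimum distance d', and let t' = ⌊(d'−1)/2⌋. Fix a basis B of GF(2^m) over GF(2) and for v ∈ GF(2^m)^n let v̄_j denote the j-th column of its n×m image matrix. Then for any two distinct codewords c, c' ∈ C, there is no vector v ∈ GF(2^m)^n satisfying both d_H(v̄_j, c̄_j) ≤ t' for all 1 ≤ j ≤ m and d_H(v̄_j, c̄'_j) ≤ t' for all 1 ≤ j ≤ m; i.e., the column-metric spheres of radius t' around distinct codewords are disjoint. -/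
/-- Let `C` be a linear code of length `n` over `GF(2^m)` whose trace code
over `GF(2)` is nonzero with minimum distance `d'`, and `t' = ⌊(d'−1)/2⌋`. Fix a basis
`B` of `GF(2^m)` over `GF(2)` with dual basis `B'`; the `j`-th column of the image
matrix of `v` is `(Tr(β'_j v_i))_i`. Then for distinct codewords `c, c' ∈ C` there is
no `v` whose image-matrix columns are simultaneously within Hamming distance `t'` of
the corresponding columns of the images of both `c` and `c'`. -/
theorem stmt_9 (E : Type*) [Field E] [Fintype E] [DecidableEq E] [Algebra (ZMod 2) E]
    (m n d' t' : ℕ)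
    (B : Module.Basis (Fin m) (ZMod 2) E) (B' : Fin m → E)
    (hdual : ∀ i j, Algebra.trace (ZMod 2) E (B i * B' j) = if i = j then 1 else 0)
    (C : Submodule E (Fin n → E))
    (hd' : IsLeast {w | ∃ c ∈ C, (fun i => Algebra.trace (ZMod 2) E (c i)) ≠ 0 ∧
      hammingNorm (fun i => Algebra.trace (ZMod 2) E (c i)) = w} d')
    (ht' : t' = (d' - 1) / 2)
    (c c' : Fin n → E) (hc : c ∈ C) (hc' : c' ∈ C) (hne : c ≠ c') :
    ¬ ∃ v : Fin n → E,
      (∀ j : Fin m, hammingDist (fun i => Algebra.trace (ZMod 2) E (B' j * v i))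
          (fun i => Algebra.trace (ZMod 2) E (B' j * c i)) ≤ t') ∧
      (∀ j : Fin m, hammingDist (fun i => Algebra.trace (ZMod 2) E (B' j * v i))
          (fun i => Algebra.trace (ZMod 2) E (B' j * c' i)) ≤ t') := by
  rintro ⟨v, h1, h2⟩
  -- key: trace against dual basis gives coordinates
  have key : ∀ (x : E) (j : Fin m),
      Algebra.trace (ZMod 2) E (B' j * x) = B.repr x j := by
    intro x j
    conv_lhs => rw [← Module.Basis.sum_repr B x, Finset.mul_sum]
    rw [map_sum]
    have : ∀ k ∈ Finset.univ, Algebra.trace (ZMod 2) E (B' j * B.repr x k • B k)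
        = if k = j then B.repr x k else 0 := by
      intro k _
      rw [mul_smul_comm, map_smul, mul_comm, hdual]
      simp only [smul_eq_mul, mul_ite, mul_one, mul_zero]
    rw [Finset.sum_congr rfl this, Finset.sum_ite_eq' Finset.univ j (fun k => B.repr x k)]
    simp
  -- difference is a nonzero codeword
  have hw : c - c' ∈ C := sub_mem hc hc'
  have hwne : c - c' ≠ 0 := sub_ne_zero.mpr hne
  obtain ⟨i, hi⟩ := Function.ne_iff.mp hwne
  have hi' : (c - c') i ≠ 0 := by simpa using hi
  -- find j with nonzero trace coordinate
  have hj : ∃ j : Fin m, B.repr ((c - c') i) j ≠ 0 := by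
    by_contra h
    push_neg at h
    apply hi'
    have hz : B.repr ((c - c') i) = 0 := Finsupp.ext h
    simpa using (LinearEquiv.map_eq_zero_iff B.repr).mp hz
  obtain ⟨j, hj⟩ := hj
  -- the codeword B' j • (c - c') has nonzero trace vector
  set u : Fin n → E := B' j • (c - c') with hu
  have huC : u ∈ C := C.smul_mem _ hw
  have htr : (fun i => Algebra.trace (ZMod 2) E (u i)) ≠ 0 := by
    intro h0
    apply hj
    have := congrFun h0 i
    simp only [hu, Pi.smul_apply, smul_eq_mul] at this
    rw [key] at this
    simpa using this
  -- d' is a lower bound on its weight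
  have hle : d' ≤ hammingNorm (fun i => Algebra.trace (ZMod 2) E (u i)) :=
    hd'.2 ⟨u, huC, htr, rfl⟩
  -- this weight equals the column distance
  have hcol : hammingNorm (fun i => Algebra.trace (ZMod 2) E (u i))
      = hammingDist (fun i => Algebra.trace (ZMod 2) E (B' j * c i))
        (fun i => Algebra.trace (ZMod 2) E (B' j * c' i)) := by
    rw [hammingDist_eq_hammingNorm]
    congr 1
    funext i
    simp only [hu, Pi.smul_apply, smul_eq_mul, Pi.sub_apply]
    rw [mul_sub, map_sub]
    simp only [Pi.add_apply, Pi.neg_apply]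
    generalize Algebra.trace (ZMod 2) E (B' j * c i) = a
    generalize Algebra.trace (ZMod 2) E (B' j * c' i) = b
    revert a b; decide
  -- triangle inequality
  have htri : hammingDist (fun i => Algebra.trace (ZMod 2) E (B' j * c i))
      (fun i => Algebra.trace (ZMod 2) E (B' j * c' i)) ≤ 2 * t' := by
    have := hammingDist_triangle (fun i => Algebra.trace (ZMod 2) E (B' j * c i))
      (fun i => Algebra.trace (ZMod 2) E (B' j * v i))
      (fun i => Algebra.trace (ZMod 2) E (B' j * c' i))
    have hA : hammingDist (fun i => Algebra.trace (ZMod 2) E (B' j * c i))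
        (fun i => Algebra.trace (ZMod 2) E (B' j * v i)) ≤ t' := by
      rw [hammingDist_comm]; exact h1 j
    have hB := h2 j
    omega
  -- d' ≥ 1
  obtain ⟨c0, _, hc0ne, hc0w⟩ := hd'.1
  have hd1 : 1 ≤ d' := by
    rcases Nat.eq_zero_or_pos d' with h0 | h
    · exfalso
      apply hc0ne
      rw [h0] at hc0w
      exact hammingNorm_eq_zero.mp hc0w
    · exact h
  -- contradiction
  have hfin : d' ≤ 2 * t' := by
    rw [hcol] at hle
    exact hle.trans htri
  omega
end

section
/- Let C be an (n,k) linear code over GF(2^m) with k ≥ 1 whose trace code Tr(C) is nonzero with minimum distance d', and let t' = ⌊(d'−1)/2⌋. Then (2^m)^{n−k} ≥ (Σ_{l=0}^{t'} binom(n,l))^m. (The set of vectors v ∈ GF(2^m)^n whose image-matrix columns are each within Hamming distance t' of the corresponding columns of the image of a fixed codeword has exactly (Σ_{l=0}^{t'} binom(n,l))^m elements, and these sets are disjoint for distinct codewords.) -/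
lemma zmod2_cases (a : ZMod 2) : a = 0 ∨ a = 1 := by revert a; decide

def finsetEquiv (n : ℕ) : (Fin n → ZMod 2) ≃ Finset (Fin n) where
  toFun f := Finset.univ.filter (fun i => f i ≠ 0)
  invFun s := fun i => if i ∈ s then 1 else 0
  left_inv f := by
    funext i
    rcases zmod2_cases (f i) with h | h <;> simp [h]
  right_inv s := by
    ext i
    simp

lemma norm_eq_card (n : ℕ) (f : Fin n → ZMod 2) : hammingNorm f = (finsetEquiv n f).card := rfl

lemma ball_card (n t : ℕ) :
    Fintype.card {f : Fin n → ZMod 2 // hammingNorm f ≤ t} =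
      ∑ l ∈ Finset.range (t + 1), n.choose l := by
  rw [Fintype.card_congr ((finsetEquiv n).subtypeEquiv
    (p := fun f => hammingNorm f ≤ t) (q := fun s => s.card ≤ t)
    (fun f => by rw [norm_eq_card]))]
  rw [Fintype.card_subtype]
  have hpart : (Finset.univ.filter (fun s : Finset (Fin n) => s.card ≤ t)) =
      (Finset.range (t + 1)).biUnion (fun l => Finset.powersetCard l Finset.univ) := by
    ext s
    simp [Nat.lt_succ_iff, Finset.mem_powersetCard]
  rw [hpart, Finset.card_biUnion]
  · refine Finset.sum_congr rfl fun l _ => ?_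
    rw [Finset.card_powersetCard, Finset.card_univ, Fintype.card_fin]
  · intro a _ b _ hab
    simp only [Finset.disjoint_left, Finset.mem_powersetCard]
    rintro s ⟨-, h1⟩ ⟨-, h2⟩
    omega

set_option maxHeartbeats 1600000 in
/-- Let `C` be an `(n,k)` code over `GF(2^m)` with `k ≥ 1` whose trace
code over `GF(2)` is nonzero with minimum distance `d'`, and `t' = ⌊(d'−1)/2⌋`. Then
`(2^m)^{n−k} ≥ (Σ_{l=0}^{t'} C(n,l))^m` (a sphere-packing bound obtained from the
disjoint column-metric spheres of radius `t'` around codewords). -/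
theorem stmt_10 (E : Type*) [Field E] [Fintype E] [DecidableEq E] [Algebra (ZMod 2) E]
    (m n k d' t' : ℕ) (hm : Module.finrank (ZMod 2) E = m)
    (C : Submodule E (Fin n → E)) (hk : Module.finrank E C = k) (hk1 : 1 ≤ k)
    (hd' : IsLeast {w | ∃ c ∈ C, (fun i => Algebra.trace (ZMod 2) E (c i)) ≠ 0 ∧
      hammingNorm (fun i => Algebra.trace (ZMod 2) E (c i)) = w} d')
    (ht' : t' = (d' - 1) / 2) :
    (∑ l ∈ Finset.range (t' + 1), n.choose l) ^ m ≤ (2 ^ m) ^ (n - k) := by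
  classical
  haveI : Module.Finite (ZMod 2) E := Module.Finite.of_finite
  subst hm
  set m := Module.finrank (ZMod 2) E with hm
  -- d' ≥ 1
  obtain ⟨c₀, hc₀C, hc₀ne, hc₀w⟩ := hd'.1
  have hd1 : 1 ≤ d' := hc₀w ▸ hammingNorm_pos_iff.mpr hc₀ne
  have h2t : 2 * t' ≤ d' - 1 := by omega
  -- setup
  let b : Module.Basis (Fin m) (ZMod 2) E := Module.finBasis (ZMod 2) E
  let ι : (Fin m → Fin n → ZMod 2) → (Fin n → E) := fun N i => ∑ j, N j i • b j
  have hrepr : ∀ (N : Fin m → Fin n → ZMod 2) (i : Fin n) (j : Fin m),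
      b.repr (ι N i) j = N j i := by
    intro N i j
    have := Module.Basis.repr_sum_self b (fun j => N j i)
    exact congrFun this j
  let T := (Algebra.traceForm (ZMod 2) E).toDual (traceForm_nondegenerate (ZMod 2) E)
  -- the injection
  let S := {N : Fin m → Fin n → ZMod 2 // ∀ j, hammingNorm (N j) ≤ t'}
  let F : ↥C × S → (Fin n → E) := fun p => (p.1 : Fin n → E) + ι p.2.1
  have hinj : Function.Injective F := by
    rintro ⟨⟨c, hc⟩, ⟨N, hN⟩⟩ ⟨⟨c', hc'⟩, ⟨N', hN'⟩⟩ h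
    simp only [F] at h
    have hcc : c = c' := by
      by_contra hne
      set v : Fin n → E := c - c' with hv
      have hvC : v ∈ C := sub_mem hc hc'
      have hvne : v ≠ 0 := sub_ne_zero.mpr hne
      have hvι : v = ι (fun j i => N' j i - N j i) := by
        funext i
        have h1 : c i + ι N i = c' i + ι N' i := congrFun h i
        have : v i = ι N' i - ι N i := by
          simp only [hv, Pi.sub_apply]
          linear_combination h1
        rw [this]
        simp only [ι, ← Finset.sum_sub_distrib, sub_smul]
      obtain ⟨i, hi⟩ : ∃ i, v i ≠ 0 := by
        by_contra hall
        push_neg at hall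
        exact hvne (funext hall)
      obtain ⟨j, hj⟩ : ∃ j, b.repr (v i) j ≠ 0 := by
        by_contra hall
        push_neg at hall
        apply hi
        have : b.repr (v i) = 0 := Finsupp.ext hall
        simpa using congrArg b.repr.symm this
      -- the functional x ↦ trace (α * x) equals coordinate j
      set α := T.symm (b.coord j) with hα
      have htr : ∀ x : E, Algebra.trace (ZMod 2) E (α * x) = b.repr x j := by
        intro x
        have h1 : T α = b.coord j := T.apply_symm_apply _
        have h2 : T α x = Algebra.trace (ZMod 2) E (α * x) := by
          simp [T, LinearMap.BilinForm.toDual_def, Algebra.traceForm_apply]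
        rw [← h2, h1, Module.Basis.coord_apply]
      -- the trace-code word
      have hwC : α • v ∈ C := C.smul_mem α hvC
      have hg : (fun i' => Algebra.trace (ZMod 2) E ((α • v) i')) =
          (fun j' i' => N' j' i' - N j' i') j := by
        funext i'
        simp only [Pi.smul_apply, smul_eq_mul]
        rw [htr (v i'), hvι]; exact hrepr (fun j i => N' j i - N j i) i' j
      have hgne : (fun i' => Algebra.trace (ZMod 2) E ((α • v) i')) ≠ 0 := by
        intro h0
        apply hj
        rw [← htr (v i)]
        have := congrFun h0 i
        simpa using this
      have hdle : d' ≤ hammingNorm (fun i' => Algebra.trace (ZMod 2) E ((α • v) i')) :=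
        hd'.2 ⟨α • v, hwC, hgne, rfl⟩
      have hfun : (fun i' => N' j i' - N j i') = N' j - N j := rfl
      have hnle : hammingNorm (N' j - N j) ≤ hammingNorm (N' j) + hammingNorm (N j) := by
        rw [← neg_add_eq_sub, ← hammingDist_eq_hammingNorm, hammingDist_comm]
        calc hammingDist (N' j) (N j) ≤ hammingDist (N' j) 0 + hammingDist 0 (N j) :=
              hammingDist_triangle _ _ _
          _ = hammingNorm (N' j) + hammingNorm (N j) := by
              rw [hammingDist_zero_right, hammingDist_zero_left]
      rw [hg] at hdle
      simp only [hfun] at hdle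
      have := hN j
      have := hN' j
      omega
    subst hcc
    have hNN : ι N = ι N' := by
      have := add_left_cancel h
      exact this
    have : N = N' := by
      funext j i
      rw [← hrepr N i j, ← hrepr N' i j, congrFun hNN i]
    simp [this]
  -- counting
  haveI : Fintype ↥C := Fintype.ofFinite _
  have hcard := Fintype.card_le_of_injective F hinj
  have hE : Fintype.card E = 2 ^ m := by
    rw [Module.card_eq_pow_finrank (K := ZMod 2) (V := E), ZMod.card]
  have hC : Fintype.card ↥C = (2 ^ m) ^ k := by
    rw [Module.card_eq_pow_finrank (K := E) (V := ↥C), hE, hk]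
  have hS : Fintype.card S = (∑ l ∈ Finset.range (t' + 1), n.choose l) ^ m := by
    rw [Fintype.card_congr (Equiv.subtypePiEquivPi
      (p := fun j (f : Fin n → ZMod 2) => hammingNorm f ≤ t'))]
    rw [Fintype.card_pi]
    simp [ball_card n t']
  have hFull : Fintype.card (Fin n → E) = (2 ^ m) ^ n := by
    rw [Fintype.card_fun, hE, Fintype.card_fin]
  rw [Fintype.card_prod, hC, hS, hFull] at hcard
  have hkn : k ≤ n := by
    rw [← hk]
    calc Module.finrank E ↥C ≤ Module.finrank E (Fin n → E) := Submodule.finrank_le C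
      _ = n := by rw [Module.finrank_fintype_fun_eq_card, Fintype.card_fin]
  have hpos : 0 < (2 ^ m) ^ k := by positivity
  apply Nat.le_of_mul_le_mul_right _ hpos
  calc (∑ l ∈ Finset.range (t' + 1), n.choose l) ^ m * (2 ^ m) ^ k
      ≤ (2 ^ m) ^ n := by rw [mul_comm] at hcard; exact hcard
    _ = (2 ^ m) ^ (n - k) * (2 ^ m) ^ k := by
        rw [← pow_add, Nat.sub_add_cancel hkn]
end

section
/- Let n = 2^m − 1, let α be a primitive element of GF(2^m), and let Z ⊆ {0,1,...,n−1}. Let C = {c ∈ GF(2^m)^n : Σ_{j=0}^{n−1} c_j α^{sj} = 0 for all s ∈ Z} be the cyclic code over GF(2^m) with zero set Z. Then the trace code Tr(C) equals the binary cyclic code with zero set Z̃, where Z̃ = ∪{C_s : s ∈ {0,...,n−1}, C_s ⊆ Z} is the largest union of cyclotomic cosets modulo n contained in Z; that is, Tr(C) = {b ∈ GF(2)^n : Σ_{j=0}^{n−1} b_j α^{sj} = 0 for all s ∈ Z̃}. -/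
open Finset Polynomial

lemma aux_card_root_le {E : Type*} [Field E] [Fintype E] [DecidableEq E]
    (P : Polynomial E) (hP : P ≠ 0) :
    (Finset.univ.filter fun x : E => P.eval x = 0).card ≤ P.natDegree := by
  have hsub : (Finset.univ.filter fun x : E => P.eval x = 0) ⊆ P.roots.toFinset := by
    intro x hx
    rw [Finset.mem_filter] at hx
    rw [Multiset.mem_toFinset, Polynomial.mem_roots hP]
    exact hx.2
  exact le_trans (Finset.card_le_card hsub)
    (le_trans (Multiset.toFinset_card_le _) (Polynomial.card_roots' P))

lemma aux_fix_card {E : Type*} [Field E] [Fintype E] [DecidableEq E]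
    (e : ℕ) (he : 1 ≤ e) :
    (Finset.univ.filter fun x : E => x ^ (2^e) = x).card ≤ 2^e := by
  have h2e : (2:ℕ)^e ≠ 1 := by
    have : (2:ℕ)^1 ≤ 2^e := Nat.pow_le_pow_right (by norm_num) he
    omega
  set P : Polynomial E := X ^ (2^e) - X with hPdef
  have hco : P.coeff (2^e) = 1 := by
    simp [hPdef, Polynomial.coeff_X_pow, Polynomial.coeff_X, h2e, Ne.symm h2e]
  have hP : P ≠ 0 := fun h => by simp [h] at hco
  have hdeg : P.natDegree ≤ 2^e := by
    refine le_trans (Polynomial.natDegree_sub_le _ _) ?_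
    rw [Polynomial.natDegree_X_pow, Polynomial.natDegree_X]
    exact max_le le_rfl Nat.one_le_two_pow
  have hset : (Finset.univ.filter fun x : E => x ^ (2^e) = x)
      = (Finset.univ.filter fun x : E => P.eval x = 0) := by
    apply Finset.filter_congr; intro x _
    simp [hPdef, sub_eq_zero]
  rw [hset]
  exact le_trans (aux_card_root_le P hP) hdeg

open Finset Polynomial

lemma aux_Td_surj {E : Type*} [Field E] [Fintype E] (hE2 : CharP E 2)
    (m d : ℕ) (hm : 1 ≤ m) (hcard : Fintype.card E = 2 ^ m)
    (hd1 : 1 ≤ d) (hdm : d ∣ m)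
    (β : E) (hβ : β ^ (2^d) = β) :
    ∃ a : E, ∑ i ∈ Finset.range (m / d), a ^ (2^(d*i)) = β := by
  classical
  haveI := hE2
  haveI : Fact (Nat.Prime 2) := ⟨Nat.prime_two⟩
  set k := m / d with hk
  have hdk : d * k = m := Nat.mul_div_cancel' hdm
  have hk1 : 1 ≤ k := by
    rcases Nat.eq_zero_or_pos k with h | h
    · rw [h, mul_zero] at hdk; omega
    · exact h
  have hdm' : d ≤ m := Nat.le_of_dvd (by omega) hdm
  have hpowcard : ∀ x : E, x ^ ((2:ℕ)^m) = x := by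
    intro x; rw [← hcard]; exact FiniteField.pow_card x
  -- the additive map
  let f : E →+ E :=
    { toFun := fun x => ∑ i ∈ Finset.range k, x ^ (2^(d*i)),
      map_zero' := by
        apply Finset.sum_eq_zero; intro i _
        exact zero_pow (by positivity),
      map_add' := by
        intro x y
        show ∑ i ∈ Finset.range k, (x+y) ^ (2^(d*i)) = _
        rw [← Finset.sum_add_distrib]
        exact Finset.sum_congr rfl fun i _ => add_pow_char_pow x y 2 (d*i) }
  have hfdef : ∀ x : E, f x = ∑ i ∈ Finset.range k, x ^ (2^(d*i)) := fun _ => rfl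
  -- fixed by 2^d power
  have hfix : ∀ x : E, (f x) ^ (2^d) = f x := by
    intro x
    have h1 : (f x) ^ ((2:ℕ)^d) = ∑ i ∈ Finset.range k, x ^ (2^(d*(i+1))) := by
      rw [hfdef, sum_pow_char_pow]
      refine Finset.sum_congr rfl fun i _ => ?_
      rw [← pow_mul, ← pow_add]
      congr 1
    have hg : x ^ ((2:ℕ)^(d*k)) = x ^ ((2:ℕ)^(d*0)) := by
      rw [hdk, hpowcard x, mul_zero, pow_zero, pow_one]
    have h2 := Finset.sum_range_succ' (fun i => x ^ ((2:ℕ)^(d*i))) k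
    have h3 := Finset.sum_range_succ (fun i => x ^ ((2:ℕ)^(d*i))) k
    rw [h1, hfdef]
    have := h2.symm.trans h3
    -- ∑ g(i+1) + g 0 = ∑ g + g k
    rw [hg] at this
    exact add_right_cancel this
  -- kernel bound via polynomial
  set P : Polynomial E := ∑ i ∈ Finset.range k, X ^ (2^(d*i)) with hPdef
  have hPco : P.coeff (2^(d*(k-1))) = 1 := by
    rw [hPdef, Polynomial.finset_sum_coeff]
    rw [Finset.sum_eq_single_of_mem (k-1) (Finset.mem_range.mpr (by omega))]
    · rw [Polynomial.coeff_X_pow, if_pos rfl]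
    · intro i hi hne
      rw [Polynomial.coeff_X_pow, if_neg]
      intro h
      have := Nat.pow_right_injective (le_refl 2) h
      have : i = k - 1 := by
        have := Nat.eq_of_mul_eq_mul_left (show 0 < d by omega) this.symm
        omega
      exact hne this
  have hP0 : P ≠ 0 := fun h => by simp [h] at hPco
  have hPdeg : P.natDegree ≤ 2^(d*(k-1)) := by
    apply Polynomial.natDegree_sum_le_of_forall_le
    intro i hi
    rw [Finset.mem_range] at hi
    rw [Polynomial.natDegree_X_pow]
    exact Nat.pow_le_pow_right (by norm_num)
      (Nat.mul_le_mul_left d (by omega : i ≤ k - 1))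
  have heval : ∀ x : E, P.eval x = f x := by
    intro x
    simp only [hPdef, hfdef, Polynomial.eval_finset_sum, Polynomial.eval_pow,
      Polynomial.eval_X]
  have hdk1 : d * (k - 1) = m - d := by
    have h1 : d * (k - 1) + d = d * k := by
      rw [← Nat.mul_succ]; congr 1; omega
    omega
  -- cardinalities
  have hEcard : Nat.card E = 2^m := by rw [Nat.card_eq_fintype_card, hcard]
  have hker_le : Nat.card f.ker ≤ 2^(m-d) := by
    have hsub : ((f.ker : Set E)) ⊆
        ↑(Finset.univ.filter fun x : E => P.eval x = 0) := by
      intro x hx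
      simp only [Finset.coe_filter, Set.mem_setOf_eq, Finset.mem_univ, true_and]
      rw [heval]
      exact hx
    calc Nat.card f.ker = (f.ker : Set E).ncard := (Nat.card_coe_set_eq _)
      _ ≤ ((Finset.univ.filter fun x : E => P.eval x = 0) : Finset E).card := by
          rw [← Set.ncard_coe_finset]
          exact Set.ncard_le_ncard hsub (Set.toFinite _)
      _ ≤ P.natDegree := aux_card_root_le P hP0
      _ ≤ 2^(m-d) := by rw [← hdk1]; exact hPdeg
  have hq := AddSubgroup.card_eq_card_quotient_mul_card_addSubgroup f.ker
  have hqr : Nat.card (E ⧸ f.ker) = Nat.card f.range :=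
    Nat.card_congr (QuotientAddGroup.quotientKerEquivRange f).toEquiv
  have hrange_ge : 2^d ≤ Nat.card f.range := by
    have hpos : 0 < (2:ℕ)^(m-d) := by positivity
    have h1 : (2:ℕ)^d * 2^(m-d) ≤ Nat.card f.range * 2^(m-d) := by
      rw [← pow_add]
      have hdm2 : d + (m - d) = m := by omega
      rw [hdm2]
      calc (2:ℕ)^m = Nat.card E := hEcard.symm
        _ = Nat.card (E ⧸ f.ker) * Nat.card f.ker := hq
        _ = Nat.card f.range * Nat.card f.ker := by rw [hqr]
        _ ≤ Nat.card f.range * 2^(m-d) := Nat.mul_le_mul_left _ hker_le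
    exact Nat.le_of_mul_le_mul_right h1 hpos
  -- finish: range = fixed points
  set Rfin := Finset.univ.filter (fun y : E => y ∈ f.range) with hRfin
  set Ffin := Finset.univ.filter (fun y : E => y ^ (2^d) = y) with hFfin
  have hRF : Rfin ⊆ Ffin := by
    intro y hy
    rw [hRfin, Finset.mem_filter] at hy
    obtain ⟨x, hx⟩ := hy.2
    rw [hFfin, Finset.mem_filter]
    exact ⟨Finset.mem_univ _, hx ▸ hfix x⟩
  have hRcard : Rfin.card = Nat.card f.range := by
    have hset : (Rfin : Set E) = (f.range : Set E) := by
      ext y; simp [hRfin]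
    rw [← Set.ncard_coe_finset, hset, ← Nat.card_coe_set_eq]
    rfl
  have hF_le : Ffin.card ≤ 2^d := aux_fix_card d hd1
  have heqRF : Rfin = Ffin :=
    Finset.eq_of_subset_of_card_le hRF (by omega)
  have hβmem : β ∈ Rfin := by
    rw [heqRF, hFfin, Finset.mem_filter]
    exact ⟨Finset.mem_univ _, hβ⟩
  rw [hRfin, Finset.mem_filter] at hβmem
  obtain ⟨a, ha⟩ := hβmem.2
  exact ⟨a, ha⟩

lemma aux_trace_eq {E : Type*} [Field E] [Fintype E] [Algebra (ZMod 2) E]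
    (m : ℕ) (hm : 1 ≤ m) (hcard : Fintype.card E = 2 ^ m) (x : E) :
    algebraMap (ZMod 2) E (Algebra.trace (ZMod 2) E x)
      = ∑ i ∈ Finset.range m, x ^ (2^i) := by
  classical
  haveI : CharP E 2 := charP_of_injective_algebraMap (algebraMap (ZMod 2) E).injective 2
  haveI : Fact (Nat.Prime 2) := ⟨Nat.prime_two⟩
  have hfrobcomm : ∀ r : ZMod 2, (algebraMap (ZMod 2) E r)^2 = algebraMap (ZMod 2) E r := by
    have hr2 : ∀ r : ZMod 2, r ^ 2 = r := fun r => ZMod.pow_card r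
    intro r
    rw [← map_pow, hr2]
  let φh : E →ₐ[ZMod 2] E :=
    { toRingHom := frobenius E 2,
      commutes' := fun r => by simpa [frobenius_def] using hfrobcomm r }
  have hbij : Function.Bijective φh :=
    Finite.injective_iff_bijective.mp (frobenius E 2).injective
  let φ : E ≃ₐ[ZMod 2] E := AlgEquiv.ofBijective φh hbij
  have hφ : ∀ y : E, φ y = y^2 := fun y => rfl
  have hφpow : ∀ (i : ℕ) (y : E), (φ^i) y = y^(2^i) := by
    intro i
    induction i with
    | zero => intro y; simp
    | succ i ih =>
        intro y
        rw [pow_succ, AlgEquiv.mul_apply, hφ, ih, ← pow_mul]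
        congr 1
        rw [pow_succ]
        ring
  have hfinrank : Module.finrank (ZMod 2) E = m := by
    have h := Module.card_eq_pow_finrank (K := ZMod 2) (V := E)
    rw [ZMod.card, hcard] at h
    exact (Nat.pow_right_injective (le_refl 2) h.symm)
  have hcardaut : Fintype.card (E ≃ₐ[ZMod 2] E) = m := by
    rw [← Nat.card_eq_fintype_card, IsGalois.card_aut_eq_finrank, hfinrank]
  have hne : ∀ i j : ℕ, i < j → j < m → φ ^ i ≠ φ ^ j := by
    intro i j hij hjm heq
    set e := j - i with he
    have he1 : 1 ≤ e := by omega
    have hinj : Function.Injective (fun z : E => z ^ (2^i)) := by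
      intro a b hab
      apply (iterateFrobenius E 2 i).injective
      simpa [iterateFrobenius_def] using hab
    have hallfix : ∀ y : E, y ^ (2^e) = y := by
      intro y
      apply hinj
      show (y ^ (2^e)) ^ (2^i) = y ^ (2^i)
      rw [← pow_mul, ← pow_add]
      have h1 : e + i = j := by omega
      rw [h1]
      have h2 := congrArg (fun ψ : E ≃ₐ[ZMod 2] E => ψ y) heq
      simp only [hφpow] at h2
      exact h2.symm
    have hfe : (Finset.univ.filter fun y : E => y ^ (2^e) = y) = Finset.univ :=
      Finset.filter_true_of_mem fun y _ => hallfix y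
    have hcardle := aux_fix_card (E := E) e he1
    rw [hfe, Finset.card_univ, hcard] at hcardle
    have hlt : (2:ℕ)^e < 2^m := Nat.pow_lt_pow_right (by norm_num) (by omega)
    omega
  have hginj : Function.Injective (fun i : Fin m => φ ^ (i:ℕ)) := by
    intro i j hijeq
    by_contra hne2
    have hvalne : (i:ℕ) ≠ (j:ℕ) := fun h => hne2 (Fin.ext h)
    rcases lt_or_gt_of_ne hvalne with h | h
    · exact hne _ _ h j.isLt hijeq
    · exact hne _ _ h i.isLt hijeq.symm
  have hgbij : Function.Bijective (fun i : Fin m => φ ^ (i:ℕ)) := by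
    rw [Fintype.bijective_iff_injective_and_card]
    exact ⟨hginj, by simp [hcardaut]⟩
  rw [trace_eq_sum_automorphisms]
  rw [← (Fintype.sum_bijective _ hgbij (fun i : Fin m => (φ^(i:ℕ)) x)
      (fun σ => σ x) (fun i => rfl))]
  rw [← Fin.sum_univ_eq_sum_range (fun i => x ^ (2^i)) m]
  exact Finset.sum_congr rfl fun i _ => hφpow _ _

set_option maxHeartbeats 1000000 in
/-- Let `n = 2^m − 1`, `α` a primitive element of `GF(2^m)`, and `C` the
cyclic code over `GF(2^m)` of length `n` with zero set `Z ⊆ {0,...,n−1}`. Then the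
trace code `Tr(C)` equals the binary cyclic code whose zero set `Z̃` is the largest
union of cyclotomic cosets modulo `n` contained in `Z` (the cyclotomic coset of `s`
being `{s·2^j mod n : j ≥ 0}`). -/
theorem stmt_13 (E : Type*) [Field E] [Fintype E] [Algebra (ZMod 2) E]
    (m : ℕ) (hm : 1 ≤ m) (hcard : Fintype.card E = 2 ^ m)
    (n : ℕ) (hn : n = 2 ^ m - 1)
    (α : E) (hα : orderOf α = n)
    (Z : Set ℕ) (hZ : ∀ s ∈ Z, s < n)
    (C : Set (Fin n → E))
    (hC : C = {c | ∀ s ∈ Z, ∑ j : Fin n, c j * α ^ (s * (j : ℕ)) = 0})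
    (Ztil : Set ℕ)
    (hZtil : Ztil = {u | ∃ s, s < n ∧ (∀ v, (∃ jj : ℕ, v = s * 2 ^ jj % n) → v ∈ Z) ∧
      (∃ jj : ℕ, u = s * 2 ^ jj % n)}) :
    {y : Fin n → ZMod 2 | ∃ c ∈ C, (fun i => Algebra.trace (ZMod 2) E (c i)) = y} =
    {b : Fin n → ZMod 2 | ∀ s ∈ Ztil,
      ∑ j : Fin n, algebraMap (ZMod 2) E (b j) * α ^ (s * (j : ℕ)) = 0} := by
  classical
  subst hC hZtil
  have hm2 : (2:ℕ) ≤ 2^m := by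
    calc (2:ℕ) = 2^1 := (pow_one 2).symm
    _ ≤ 2^m := Nat.pow_le_pow_right (by norm_num) hm
  have h2mpos : (1:ℕ) ≤ 2^m := by omega
  have hn1 : 1 ≤ n := by omega
  have hn2m : n + 1 = 2^m := by omega
  haveI : NeZero n := ⟨by omega⟩
  haveI hEchar : CharP E 2 :=
    charP_of_injective_algebraMap (algebraMap (ZMod 2) E).injective 2
  haveI : Fact (Nat.Prime 2) := ⟨Nat.prime_two⟩
  have halg_inj : Function.Injective (algebraMap (ZMod 2) E) :=
    (algebraMap (ZMod 2) E).injective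
  have hαn : α ^ n = 1 := by rw [← hα]; exact pow_orderOf_eq_one α
  have h2m1 : ((2:ZMod n))^m = 1 := by
    have h := congrArg (fun a : ℕ => (a : ZMod n)) hn2m
    push_cast at h
    rw [ZMod.natCast_self] at h
    rw [← h]
    ring
  -- power basics
  have hpw_mod : ∀ a : ℕ, α ^ (a % n) = α ^ a := by
    intro a; rw [← hα]; exact pow_mod_orderOf α a
  set pw : ZMod n → E := fun t => α ^ t.val with hpw
  have hpw_nat : ∀ a : ℕ, pw ((a : ZMod n)) = α ^ a := by
    intro a
    show α ^ ((a : ZMod n)).val = α ^ a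
    rw [ZMod.val_natCast]
    exact hpw_mod a
  have hpw_add : ∀ t u : ZMod n, pw (t + u) = pw t * pw u := by
    intro t u
    show α ^ (t+u).val = α ^ t.val * α ^ u.val
    rw [ZMod.val_add, hpw_mod, pow_add]
  have hpw_sq : ∀ t : ZMod n, pw t ^ 2 = pw (2 * t) := by
    intro t; rw [two_mul, hpw_add]; ring
  have hpw_pow : ∀ (k : ℕ) (t : ZMod n), pw t ^ (2^k) = pw ((2:ZMod n)^k * t) := by
    intro k
    induction k with
    | zero => intro t; simp
    | succ k ih =>
        intro t
        have h1 : (2:ZMod n)^(k+1) * t = 2 * ((2:ZMod n)^k * t) := by ring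
        rw [h1, ← hpw_sq, ← ih]
        conv_rhs => rw [← pow_mul]
        rw [pow_succ]
  have hpw_mul_val : ∀ t u : ZMod n, pw (t * u) = α ^ (t.val * u.val) := by
    intro t u
    show α ^ (t*u).val = _
    rw [ZMod.val_mul, hpw_mod]
  -- geometric sum
  have hnE : ((n:ℕ) : E) = 1 := by
    have h2 : ((2:ℕ) : E) = 0 := by exact_mod_cast CharP.cast_eq_zero E 2
    have h0 : ((2^m : ℕ) : E) = 0 := by
      rw [Nat.cast_pow, h2, zero_pow (by omega : m ≠ 0)]
    have hadd : ((n:ℕ) : E) + 1 = 0 := by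
      have h := congrArg (fun a : ℕ => (a : E)) hn2m
      simp only [Nat.cast_add, Nat.cast_one] at h
      rw [h0] at h
      exact h
    have hneg : ((n:ℕ):E) = -1 := eq_neg_of_add_eq_zero_left hadd
    rw [hneg, CharTwo.neg_eq]
  have hgeom : ∀ w : ZMod n,
      (∑ jj ∈ Finset.range n, (α ^ w.val) ^ jj) = if w = 0 then 1 else 0 := by
    intro w
    by_cases hw : w = 0
    · rw [if_pos hw, hw, ZMod.val_zero, pow_zero]
      simp only [one_pow, Finset.sum_const, Finset.card_range, nsmul_eq_mul, mul_one]
      exact hnE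
    · rw [if_neg hw]
      have hx1 : (α ^ w.val) ≠ 1 := by
        intro h
        have hdvd := orderOf_dvd_iff_pow_eq_one.mpr h
        rw [hα] at hdvd
        have hv0 : w.val ≠ 0 := fun h0 => hw ((ZMod.val_eq_zero w).mp h0)
        exact Nat.not_dvd_of_pos_of_lt (by omega) (ZMod.val_lt w) hdvd
      rw [geom_sum_eq hx1]
      have hxn : (α ^ w.val) ^ n = 1 := by
        rw [← pow_mul, mul_comm, pow_mul, hαn, one_pow]
      rw [hxn, sub_self, zero_div]
  have horth1 : ∀ t : ZMod n,
      (∑ j : Fin n, pw (t * ((j:ℕ) : ZMod n))) = if t = 0 then 1 else 0 := by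
    intro t
    have hterm : ∀ j : Fin n, pw (t * ((j:ℕ) : ZMod n)) = (α ^ t.val) ^ (j:ℕ) := by
      intro j
      rw [hpw_mul_val, ZMod.val_cast_of_lt j.isLt, pow_mul]
    rw [Finset.sum_congr rfl (fun j _ => hterm j)]
    rw [Fin.sum_univ_eq_sum_range (fun jj => (α ^ t.val)^jj) n]
    exact hgeom t
  have hsumval : ∀ g : ℕ → E, (∑ t : ZMod n, g t.val) = ∑ j : Fin n, g (j:ℕ) := by
    intro g
    have hb : Function.Bijective (fun t : ZMod n => (⟨t.val, ZMod.val_lt t⟩ : Fin n)) := by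
      rw [Fintype.bijective_iff_injective_and_card]
      constructor
      · intro a b hab
        exact ZMod.val_injective n (congrArg Fin.val hab)
      · simp [ZMod.card]
    exact Fintype.sum_bijective _ hb _ _ (fun t => rfl)
  have horth2 : ∀ u : ZMod n,
      (∑ t : ZMod n, pw (t * u)) = if u = 0 then 1 else 0 := by
    intro u
    have hterm : ∀ t : ZMod n, pw (t * u) = (α ^ u.val) ^ (t.val) := by
      intro t; rw [hpw_mul_val, mul_comm t.val, pow_mul]
    rw [Finset.sum_congr rfl (fun t _ => hterm t)]
    rw [hsumval (fun a => (α ^ u.val)^a)]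
    rw [Fin.sum_univ_eq_sum_range (fun a => (α ^ u.val)^a) n]
    exact hgeom u
  -- hat transform
  set hat : (Fin n → E) → ZMod n → E :=
    fun v t => ∑ j : Fin n, v j * pw (t * ((j:ℕ) : ZMod n)) with hhat
  have htrans : ∀ (c : Fin n → E) (s : ℕ),
      (∑ j : Fin n, c j * α ^ (s * (j:ℕ))) = hat c ((s : ZMod n)) := by
    intro c s
    rw [hhat]
    apply Finset.sum_congr rfl
    intro j _
    congr 1
    rw [← Nat.cast_mul, hpw_nat]
  have hat_inj : ∀ v w : Fin n → E, hat v = hat w → v = w := by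
    have hform : ∀ (v : Fin n → E) (j : Fin n),
        (∑ t : ZMod n, hat v t * pw (t * (-((j:ℕ) : ZMod n)))) = v j := by
      intro v j
      rw [hhat]
      calc ∑ t : ZMod n, (∑ j' : Fin n, v j' * pw (t * ((j':ℕ) : ZMod n)))
            * pw (t * (-((j:ℕ) : ZMod n)))
          = ∑ t : ZMod n, ∑ j' : Fin n,
              v j' * pw (t * (((j':ℕ) : ZMod n) - ((j:ℕ) : ZMod n))) := by
            refine Finset.sum_congr rfl fun t _ => ?_
            rw [Finset.sum_mul]
            refine Finset.sum_congr rfl fun j' _ => ?_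
            rw [mul_assoc, ← hpw_add]
            congr 2
            ring
        _ = ∑ j' : Fin n, ∑ t : ZMod n,
              v j' * pw (t * (((j':ℕ) : ZMod n) - ((j:ℕ) : ZMod n))) := Finset.sum_comm
        _ = ∑ j' : Fin n, v j' *
              (if (((j':ℕ) : ZMod n) - ((j:ℕ) : ZMod n)) = 0 then 1 else 0) := by
            refine Finset.sum_congr rfl fun j' _ => ?_
            rw [← Finset.mul_sum, horth2]
        _ = v j := by
            rw [Finset.sum_congr rfl (fun j' (_ : j' ∈ Finset.univ) => ?_), Finset.sum_ite_eq' Finset.univ j v]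
            · rw [if_pos (Finset.mem_univ j)]
            · have hiff : ((((j':ℕ) : ZMod n) - ((j:ℕ) : ZMod n)) = 0) = (j' = j) := by
                apply propext
                rw [sub_eq_zero]
                constructor
                · intro h
                  apply Fin.ext
                  have := congrArg ZMod.val h
                  rwa [ZMod.val_cast_of_lt j'.isLt, ZMod.val_cast_of_lt j.isLt] at this
                · intro h; rw [h]
              simp only [hiff]
              by_cases h : j' = j
              · rw [if_pos h, if_pos h, mul_one]
              · rw [if_neg h, if_neg h, mul_zero]
    intro v w hvw
    funext j
    rw [← hform v j, ← hform w j, hvw]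
  have hsynth : ∀ A : ZMod n → E, ∃ c : Fin n → E, ∀ t, hat c t = A t := by
    intro A
    refine ⟨fun j => ∑ t : ZMod n, A t * pw (-(t * ((j:ℕ) : ZMod n))), fun u => ?_⟩
    rw [hhat]
    calc ∑ j : Fin n, (∑ t : ZMod n, A t * pw (-(t * ((j:ℕ) : ZMod n))))
          * pw (u * ((j:ℕ) : ZMod n))
        = ∑ j : Fin n, ∑ t : ZMod n, A t * pw ((u - t) * ((j:ℕ) : ZMod n)) := by
          refine Finset.sum_congr rfl fun j _ => ?_
          rw [Finset.sum_mul]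
          refine Finset.sum_congr rfl fun t _ => ?_
          rw [mul_assoc, ← hpw_add]
          congr 2
          ring
      _ = ∑ t : ZMod n, ∑ j : Fin n, A t * pw ((u - t) * ((j:ℕ) : ZMod n)) :=
          Finset.sum_comm
      _ = ∑ t : ZMod n, A t * (if (u - t) = 0 then 1 else 0) := by
          refine Finset.sum_congr rfl fun t _ => ?_
          rw [← Finset.mul_sum, horth1]
      _ = A u := by
          rw [Finset.sum_congr rfl (fun t (_ : t ∈ Finset.univ) => ?_), Finset.sum_ite_eq' Finset.univ u A]
          · rw [if_pos (Finset.mem_univ u)]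
          · have hiff : ((u - t = 0)) = (t = u) := by
              apply propext
              rw [sub_eq_zero]
              exact ⟨fun h => h.symm, fun h => h.symm⟩
            simp only [hiff]
            by_cases h : t = u
            · rw [if_pos h, if_pos h, mul_one, h]
            · rw [if_neg h, if_neg h, mul_zero]
  -- hat of the Frobenius-trace vector
  have hatT : ∀ (c : Fin n → E) (t : ZMod n),
      hat (fun j => ∑ i ∈ Finset.range m, (c j) ^ (2^i)) t
        = ∑ i ∈ Finset.range m, (hat c ((2:ZMod n)^(m-i) * t)) ^ (2^i) := by
    intro c t
    rw [hhat]
    calc ∑ j : Fin n, (∑ i ∈ Finset.range m, (c j) ^ (2^i)) * pw (t * ((j:ℕ) : ZMod n))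
        = ∑ j : Fin n, ∑ i ∈ Finset.range m,
            (c j) ^ (2^i) * pw (t * ((j:ℕ) : ZMod n)) := by
          refine Finset.sum_congr rfl fun j _ => ?_
          rw [Finset.sum_mul]
      _ = ∑ i ∈ Finset.range m, ∑ j : Fin n,
            (c j) ^ (2^i) * pw (t * ((j:ℕ) : ZMod n)) := Finset.sum_comm
      _ = ∑ i ∈ Finset.range m, (hat c ((2:ZMod n)^(m-i) * t)) ^ (2^i) := by
          refine Finset.sum_congr rfl fun i hi => ?_
          rw [Finset.mem_range] at hi
          rw [hhat]
          rw [sum_pow_char_pow]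
          refine Finset.sum_congr rfl fun j _ => ?_
          rw [mul_pow, hpw_pow]
          congr 2
          rw [← mul_assoc, ← mul_assoc, ← pow_add]
          have hexp : i + (m - i) = m := by omega
          rw [hexp, h2m1, one_mul]
  apply Set.Subset.antisymm
  · -- forward inclusion
    rintro y ⟨c, hcC, hyc⟩
    simp only [Set.mem_setOf_eq] at hcC
    intro u hu
    obtain ⟨s, hsn, hcoset, jj, huval⟩ := hu
    have hyj : ∀ j : Fin n, algebraMap (ZMod 2) E (y j)
        = ∑ i ∈ Finset.range m, (c j)^(2^i) := by
      intro j
      have h := congrFun hyc j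
      rw [← h]
      exact aux_trace_eq m hm hcard (c j)
    have hveq : (fun j : Fin n => algebraMap (ZMod 2) E (y j))
        = (fun j => ∑ i ∈ Finset.range m, (c j)^(2^i)) := funext hyj
    calc ∑ j : Fin n, algebraMap (ZMod 2) E (y j) * α ^ (u * (j:ℕ))
        = hat (fun j => algebraMap (ZMod 2) E (y j)) ((u : ZMod n)) := htrans _ u
      _ = hat (fun j => ∑ i ∈ Finset.range m, (c j)^(2^i)) ((u : ZMod n)) := by
          rw [hveq]
      _ = ∑ i ∈ Finset.range m, (hat c ((2:ZMod n)^(m-i) * ((u:ℕ) : ZMod n))) ^ (2^i) :=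
          hatT c _
      _ = 0 := by
          apply Finset.sum_eq_zero
          intro i hi
          rw [Finset.mem_range] at hi
          have hvZ : (s * 2^(jj + (m - i)) % n) ∈ Z := hcoset _ ⟨jj + (m-i), rfl⟩
          have hcast : ((s * 2^(jj + (m-i)) % n : ℕ) : ZMod n)
              = (2:ZMod n)^(m-i) * ((u:ℕ) : ZMod n) := by
            rw [ZMod.natCast_mod, huval, ZMod.natCast_mod]
            push_cast
            rw [pow_add]
            ring
          have h0 : hat c ((2:ZMod n)^(m-i) * ((u:ℕ) : ZMod n)) = 0 := by
            rw [← hcast, ← htrans c _]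
            exact hcC _ hvZ
          rw [h0, zero_pow (by positivity : (2:ℕ)^i ≠ 0)]
  · -- reverse inclusion
    intro b hb
    simp only [Set.mem_setOf_eq] at hb ⊢
    set bE : Fin n → E := fun j => algebraMap (ZMod 2) E (b j) with hbE
    set β : ZMod n → E := hat bE with hβdef
    set ZC : Set (ZMod n) := (fun s : ℕ => ((s:ZMod n))) '' Z with hZCdef
    have hZCiff : ∀ u : ZMod n, u ∈ ZC ↔ u.val ∈ Z := by
      intro u
      constructor
      · rintro ⟨s, hsZ, rfl⟩
        rwa [ZMod.val_cast_of_lt (hZ s hsZ)]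
      · intro h
        exact ⟨u.val, h, ZMod.natCast_rightInverse u⟩
    have hβ0 : ∀ t : ZMod n, (∀ k : ℕ, (2:ZMod n)^k * t ∈ ZC) → β t = 0 := by
      intro t hall
      have hcos : ∀ v, (∃ kk : ℕ, v = t.val * 2^kk % n) → v ∈ Z := by
        rintro v ⟨kk, rfl⟩
        have h1 : ((t.val * 2^kk % n : ℕ) : ZMod n) = (2:ZMod n)^kk * t := by
          rw [ZMod.natCast_mod]
          push_cast
          rw [ZMod.natCast_rightInverse t]
          ring
        have h2 := hall kk
        rw [← h1] at h2
        have h3 := (hZCiff _).mp h2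
        rwa [ZMod.val_cast_of_lt (Nat.mod_lt _ (by omega))] at h3
      have htval := hb t.val ⟨t.val, ZMod.val_lt t, hcos,
        ⟨0, by rw [pow_zero, mul_one, Nat.mod_eq_of_lt (ZMod.val_lt t)]⟩⟩
      have htval2 : ∑ j : Fin n, bE j * α ^ (t.val * (j:ℕ)) = 0 := htval
      rw [htrans bE t.val, ZMod.natCast_rightInverse t] at htval2
      show hat bE t = 0
      exact htval2
    have hbE2 : ∀ j, bE j ^ 2 = bE j := by
      intro j
      show (algebraMap (ZMod 2) E (b j))^2 = algebraMap (ZMod 2) E (b j)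
      rw [← map_pow, ZMod.pow_card (b j)]
    have hβ2 : ∀ t : ZMod n, β (2 * t) = β t ^ 2 := by
      intro t
      show hat bE (2*t) = (hat bE t)^2
      simp only [hhat]
      calc ∑ j : Fin n, bE j * pw ((2*t) * ((j:ℕ):ZMod n))
          = ∑ j : Fin n, (bE j * pw (t * ((j:ℕ):ZMod n)))^2 := by
            refine Finset.sum_congr rfl fun j _ => ?_
            rw [mul_pow, hbE2, hpw_sq, mul_assoc]
        _ = (∑ j : Fin n, bE j * pw (t * ((j:ℕ):ZMod n)))^2 := by
            rw [← sum_pow_char]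
    have hβpow : ∀ (k:ℕ) (t : ZMod n), β ((2:ZMod n)^k * t) = β t ^ (2^k) := by
      intro k
      induction k with
      | zero => intro t; simp
      | succ k ih =>
          intro t
          have h1 : (2:ZMod n)^(k+1) * t = 2 * ((2:ZMod n)^k * t) := by ring
          rw [h1, hβ2, ih, ← pow_mul, pow_succ]
    set σf : ZMod n → ZMod n := fun t => 2 * t with hσf
    have hiterf : ∀ (k:ℕ) (t : ZMod n), σf^[k] t = (2:ZMod n)^k * t := by
      intro k
      induction k with
      | zero => intro t; simp
      | succ k ih =>
          intro t
          rw [Function.iterate_succ_apply, ih]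
          show (2:ZMod n)^k * (2 * t) = (2:ZMod n)^(k+1) * t
          ring
    have hper : ∀ t : ZMod n, Function.IsPeriodicPt σf m t := by
      intro t
      have h : σf^[m] t = t := by rw [hiterf, h2m1, one_mul]
      exact h
    set dd : ZMod n → ℕ := fun t => Function.minimalPeriod σf t with hdd
    have hdpos : ∀ t, 0 < dd t :=
      fun t => Function.IsPeriodicPt.minimalPeriod_pos (by omega) (hper t)
    have hddvd : ∀ t, dd t ∣ m := fun t => (hper t).minimalPeriod_dvd
    have hdfix : ∀ t, (2:ZMod n)^(dd t) * t = t := by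
      intro t
      rw [← hiterf]
      exact Function.isPeriodicPt_minimalPeriod σf t
    have hdvd_iff : ∀ (t : ZMod n) (l : ℕ), ((2:ZMod n)^l * t = t) ↔ dd t ∣ l := by
      intro t l
      constructor
      · intro h
        have h2 : Function.IsPeriodicPt σf l t := by
          show σf^[l] t = t
          rw [hiterf]; exact h
        exact h2.minimalPeriod_dvd
      · intro h
        have h2 : Function.IsPeriodicPt σf l t :=
          Function.isPeriodicPt_iff_minimalPeriod_dvd.mpr h
        have h3 : σf^[l] t = t := h2
        rwa [hiterf] at h3
    have hmod2 : ∀ (l : ℕ) (t : ZMod n),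
        (2:ZMod n)^(l % dd t) * t = (2:ZMod n)^l * t := by
      intro l t
      have h := Function.iterate_mod_minimalPeriod_eq (f := σf) (x := t) (n := l)
      rw [hiterf, hiterf] at h
      exact h
    have h2modm : ∀ l : ℕ, (2:ZMod n)^l = (2:ZMod n)^(l % m) := by
      intro l
      conv_lhs => rw [← Nat.div_add_mod l m]
      rw [pow_add, pow_mul, h2m1, one_pow, one_mul]
    set orbF : ZMod n → Finset (ZMod n) :=
      fun t => (Finset.range m).image (fun k => (2:ZMod n)^k * t) with horbF
    have horb_mem : ∀ (t : ZMod n) (k:ℕ), (2:ZMod n)^k * t ∈ orbF t := by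
      intro t k
      simp only [horbF]
      refine Finset.mem_image.mpr ⟨k % m, Finset.mem_range.mpr (Nat.mod_lt _ (by omega)), ?_⟩
      rw [← h2modm]
    have horb_eq : ∀ (t : ZMod n) (k : ℕ), orbF ((2:ZMod n)^k * t) = orbF t := by
      have hsub : ∀ (t : ZMod n) (k : ℕ), orbF ((2:ZMod n)^k * t) ⊆ orbF t := by
        intro t k u hu
        simp only [horbF] at hu
        obtain ⟨k', _, rfl⟩ := Finset.mem_image.mp hu
        rw [← mul_assoc, ← pow_add]
        exact horb_mem t (k' + k)
      intro t k
      refine Finset.Subset.antisymm (hsub t k) ?_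
      have ht' : t = (2:ZMod n)^(m - k % m) * ((2:ZMod n)^k * t) := by
        rw [← mul_assoc, ← pow_add]
        have hk2 : (2:ZMod n)^(m - k % m + k) = (2:ZMod n)^((m - k % m + k) % m) :=
          h2modm _
        have hh : (m - k % m + k) % m = 0 := by
          have h2 : k % m ≤ k := Nat.mod_le k m
          have h3 : k % m < m := Nat.mod_lt _ (by omega)
          have hp := Nat.div_add_mod k m
          have hq : m - k % m + k = m * (1 + k / m) := by
            rw [Nat.mul_add, Nat.mul_one]
            omega
          rw [hq]
          exact Nat.mul_mod_right m _
        rw [hk2, hh, pow_zero, one_mul]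
      intro u hu
      have h5 := hsub ((2:ZMod n)^k * t) (m - k % m)
      rw [← ht'] at h5
      exact h5 hu
    have hmin_congr : ∀ (S T : Finset ℕ) (hS : S.Nonempty) (hT : T.Nonempty),
        S = T → S.min' hS = T.min' hT := by
      rintro S T hS hT rfl
      rfl
    set goodP : ZMod n → Prop :=
      fun t => ((orbF t).filter (fun u => u ∉ ZC)).Nonempty with hgoodP
    set rep : ZMod n → ZMod n :=
      fun t => if h : goodP t then
        (((((orbF t).filter (fun u => u ∉ ZC)).image ZMod.val).min'
          (by simp only [hgoodP] at h; exact h.image ZMod.val) : ℕ) : ZMod n)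
      else t with hrepdef
    have hgood_eq : ∀ (t:ZMod n) (k:ℕ), goodP ((2:ZMod n)^k * t) = goodP t := by
      intro t k
      simp only [hgoodP]
      exact congrArg (fun S : Finset (ZMod n) => (S.filter (fun u => u ∉ ZC)).Nonempty)
        (horb_eq t k)
    have hrep_mem : ∀ t : ZMod n, goodP t →
        rep t ∈ (orbF t).filter (fun u => u ∉ ZC) := by
      intro t hg
      simp only [hrepdef]
      rw [dif_pos hg]
      have hmm := Finset.min'_mem (((orbF t).filter (fun u => u ∉ ZC)).image ZMod.val)
        (by simp only [hgoodP] at hg; exact hg.image ZMod.val)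
      obtain ⟨u, hu, huv⟩ := Finset.mem_image.mp hmm
      rw [← huv, ZMod.natCast_rightInverse u]
      exact hu
    have hrep_eq : ∀ (t:ZMod n) (k:ℕ), goodP t → rep ((2:ZMod n)^k * t) = rep t := by
      intro t k hg
      have hg' : goodP ((2:ZMod n)^k * t) := by rw [hgood_eq]; exact hg
      simp only [hrepdef]
      rw [dif_pos hg', dif_pos hg]
      exact congrArg (fun a : ℕ => (a : ZMod n))
        (hmin_congr _ _ _ _ (by rw [horb_eq]))
    have hfixβ : ∀ t : ZMod n, β t ^ (2^(dd t)) = β t := by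
      intro t
      rw [← hβpow, hdfix]
    have hτex : ∀ t : ZMod n, ∃ a : E,
        ∑ i ∈ Finset.range (m / dd t), a ^ (2^(dd t * i)) = β t :=
      fun t => aux_Td_surj hEchar m (dd t) hm hcard (hdpos t) (hddvd t) (β t) (hfixβ t)
    set τ : ZMod n → E := fun t => Classical.choose (hτex t) with hτdef
    have hτspec : ∀ t, ∑ i ∈ Finset.range (m / dd t), (τ t) ^ (2^(dd t * i)) = β t :=
      fun t => Classical.choose_spec (hτex t)
    set A : ZMod n → E := fun u => if goodP u ∧ u = rep u then τ u else 0 with hA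
    obtain ⟨c, hcspec⟩ := hsynth A
    have hcC : ∀ s ∈ Z, ∑ j : Fin n, c j * α ^ (s * (j:ℕ)) = 0 := by
      intro s hs
      rw [htrans c s, hcspec]
      simp only [hA]
      have hnot : ¬ (goodP ((s:ZMod n)) ∧ (s:ZMod n) = rep ((s:ZMod n))) := by
        rintro ⟨hg1, hg2⟩
        have hmem : rep ((s:ZMod n)) ∈ (orbF ((s:ZMod n))).filter (fun u => u ∉ ZC) :=
          hrep_mem _ hg1
        rw [← hg2] at hmem
        exact (Finset.mem_filter.mp hmem).2 ⟨s, hs, rfl⟩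
      rw [if_neg hnot]
    have hmain : ∀ t : ZMod n,
        ∑ i ∈ Finset.range m, (A ((2:ZMod n)^(m-i) * t)) ^ (2^i) = β t := by
      intro t
      by_cases hg : goodP t
      · set v0 := rep t with hv0
        have hv0mem : v0 ∈ (orbF t).filter (fun u => u ∉ ZC) := by
          rw [hv0]
          exact hrep_mem _ hg
        have hv0orb : v0 ∈ orbF t := (Finset.mem_filter.mp hv0mem).1
        simp only [horbF] at hv0orb
        obtain ⟨k, hkm', hkv0⟩ := Finset.mem_image.mp hv0orb
        rw [Finset.mem_range] at hkm'
        have htv0 : (2:ZMod n)^(m-k) * v0 = t := by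
          rw [← hkv0, ← mul_assoc, ← pow_add]
          have hmk : m - k + k = m := by omega
          rw [hmk, h2m1, one_mul]
        have hd1 : 0 < dd v0 := hdpos v0
        have hdm' : dd v0 ∣ m := hddvd v0
        set k0 := (m - k) % dd v0 with hk0
        have hk0d : k0 < dd v0 := Nat.mod_lt _ hd1
        have hk0v0 : (2:ZMod n)^k0 * v0 = t := by
          rw [hk0, hmod2 (m-k) v0]
          exact htv0
        have hAval : ∀ i : ℕ, i < m →
            A ((2:ZMod n)^(m-i) * t) = if (2:ZMod n)^(m-i) * t = v0 then τ v0 else 0 := by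
          intro i him
          have hgu : goodP ((2:ZMod n)^(m-i) * t) := by rw [hgood_eq]; exact hg
          have hru : rep ((2:ZMod n)^(m-i) * t) = v0 := by
            rw [hrep_eq t (m-i) hg, hv0]
          simp only [hA]
          by_cases he : (2:ZMod n)^(m-i) * t = v0
          · rw [if_pos he, if_pos ⟨hgu, by rw [hru, he]⟩, he]
          · rw [if_neg he, if_neg]
            rintro ⟨_, h2⟩
            rw [hru] at h2
            exact he h2
        have hsum1 : ∑ i ∈ Finset.range m, (A ((2:ZMod n)^(m-i) * t)) ^ (2^i)
            = ∑ i ∈ (Finset.range m).filter (fun i => (2:ZMod n)^(m-i) * t = v0),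
                (τ v0) ^ (2^i) := by
          rw [Finset.sum_filter]
          refine Finset.sum_congr rfl fun i hi => ?_
          rw [hAval i (Finset.mem_range.mp hi)]
          by_cases hcond : (2:ZMod n)^(m-i) * t = v0
          · rw [if_pos hcond, if_pos hcond]
          · rw [if_neg hcond, if_neg hcond, zero_pow (by positivity : (2:ℕ)^i ≠ 0)]
        have hfilchar : (Finset.range m).filter (fun i => (2:ZMod n)^(m-i) * t = v0)
            = (Finset.range (m / dd v0)).image (fun l => k0 + l * dd v0) := by
          ext i
          simp only [Finset.mem_filter, Finset.mem_range, Finset.mem_image]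
          constructor
          · rintro ⟨him, hieq⟩
            have h1 : (2:ZMod n)^(m-i+k0) * v0 = v0 := by
              rw [pow_add, mul_assoc, hk0v0, hieq]
            have h2 : dd v0 ∣ (m - i + k0) := (hdvd_iff v0 _).mp h1
            have hz1 : (m - i + k0) % dd v0 = 0 := Nat.mod_eq_zero_of_dvd h2
            have hz2 : m % dd v0 = 0 := Nat.mod_eq_zero_of_dvd hdm'
            have h3 : i % dd v0 = k0 := by
              have e1 : ((m - i + k0) % dd v0 + i % dd v0) % dd v0
                  = ((m - i + k0) + i) % dd v0 := (Nat.add_mod _ _ _).symm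
              rw [hz1] at e1
              have hsum : (m - i + k0) + i = m + k0 := by omega
              rw [hsum] at e1
              have e2 : (m + k0) % dd v0 = k0 := by
                rw [Nat.add_mod, hz2, Nat.zero_add, Nat.mod_mod_of_dvd _ (dvd_refl _),
                  Nat.mod_eq_of_lt hk0d]
              rw [Nat.zero_add, Nat.mod_mod_of_dvd _ (dvd_refl _)] at e1
              rw [e2] at e1
              exact e1
            refine ⟨i / dd v0, ?_, ?_⟩
            · exact Nat.div_lt_div_of_lt_of_dvd hdm' him
            · have h4 := Nat.div_add_mod i (dd v0)
              have h5 : (i / dd v0) * dd v0 = dd v0 * (i / dd v0) := Nat.mul_comm _ _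
              omega
          · rintro ⟨l, hl, rfl⟩
            have hld : (l+1) * dd v0 ≤ m := by
              have h1 : l + 1 ≤ m / dd v0 := hl
              calc (l+1) * dd v0 ≤ (m / dd v0) * dd v0 := Nat.mul_le_mul_right _ h1
                _ = m := Nat.div_mul_cancel hdm'
            have hlt : k0 + l * dd v0 < m := by
              have h2 : (l+1) * dd v0 = l * dd v0 + dd v0 := by ring
              omega
            refine ⟨hlt, ?_⟩
            have hdl : dd v0 ∣ (m - (k0 + l * dd v0) + k0) := by
              have heq2 : m - (k0 + l * dd v0) + k0 = m - l * dd v0 := by omega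
              rw [heq2]
              obtain ⟨q, hq⟩ := hdm'
              have h2 : (q - l) * dd v0 = q * dd v0 - l * dd v0 := Nat.sub_mul q l (dd v0)
              have h3 : m = q * dd v0 := by rw [hq]; ring
              refine ⟨q - l, ?_⟩
              have h4 : dd v0 * (q - l) = (q - l) * dd v0 := Nat.mul_comm _ _
              omega
            have h5 : (2:ZMod n)^(m - (k0 + l * dd v0) + k0) * v0 = v0 :=
              (hdvd_iff v0 _).mpr hdl
            rw [← hk0v0, ← mul_assoc, ← pow_add]
            exact h5
        have hinj2 : ∀ l1 ∈ Finset.range (m / dd v0), ∀ l2 ∈ Finset.range (m / dd v0),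
            k0 + l1 * dd v0 = k0 + l2 * dd v0 → l1 = l2 := by
          intro l1 _ l2 _ hteq
          have h6 : l1 * dd v0 = l2 * dd v0 := by omega
          exact Nat.eq_of_mul_eq_mul_right hd1 h6
        rw [hsum1, hfilchar, Finset.sum_image hinj2]
        have hstep : ∀ l, (τ v0) ^ ((2:ℕ)^(k0 + l * dd v0))
            = ((τ v0) ^ ((2:ℕ)^(dd v0 * l))) ^ ((2:ℕ)^k0) := by
          intro l
          rw [← pow_mul, ← pow_add]
          congr 1
          ring
        rw [Finset.sum_congr rfl (fun l _ => hstep l), ← sum_pow_char_pow,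
          hτspec v0, ← hβpow k0 v0, hk0v0]
      · have hsum0 : ∀ i ∈ Finset.range m, (A ((2:ZMod n)^(m-i) * t)) ^ (2^i) = 0 := by
          intro i _
          have hgu : ¬ goodP ((2:ZMod n)^(m-i) * t) := by
            rw [hgood_eq]; exact hg
          simp only [hA]
          rw [if_neg (fun h => hgu h.1), zero_pow (by positivity : (2:ℕ)^i ≠ 0)]
        rw [Finset.sum_eq_zero hsum0]
        refine (hβ0 t ?_).symm
        intro k
        by_contra hnot
        exact hg ⟨(2:ZMod n)^k * t, Finset.mem_filter.mpr ⟨horb_mem t k, hnot⟩⟩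
    have hTc : (fun j : Fin n => ∑ i ∈ Finset.range m, (c j)^(2^i)) = bE := by
      apply hat_inj
      funext t
      rw [hatT c t]
      rw [Finset.sum_congr rfl (fun i (_ : i ∈ Finset.range m) => by rw [hcspec])]
      exact hmain t
    refine ⟨c, hcC, ?_⟩
    funext j
    apply halg_inj
    calc algebraMap (ZMod 2) E (Algebra.trace (ZMod 2) E (c j))
        = ∑ i ∈ Finset.range m, (c j)^(2^i) := aux_trace_eq m hm hcard (c j)
      _ = bE j := congrFun hTc j
      _ = algebraMap (ZMod 2) E (b j) := rfl
end
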